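/- Let n ≥ 1, ε > 0, δ ≥ 0, b = e^{−ε}, q = 2δb/(1 − b + 2δb), and let N ~ Tulap(0, b, q) with cdf F_N. For any m ∈ ℝ, the function φ(x) = F_N(x − m) on {0,1,…,n} satisfies the four DP inequalities: φ(x) ≤ e^ε φ(x−1) + δ, φ(x−1) ≤ e^ε φ(x) + δ, 1 − φ(x) ≤ e^ε(1 − φ(x−1)) + δ, and 1 − φ(x−1) ≤ e^ε(1 − φ(x)) + δ, for all x ∈ {1,…,n}. -/

import Mathlib

set_option maxHeartbeats 800000

private lemma clip_le_one (a : ℝ) : max 0 (min 1 a) ≤ 1 :=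
  max_le zero_le_one (min_le_left _ _)

private lemma clip_ineq {E d a a' : ℝ} (hE : 1 ≤ E) (hd : 0 ≤ d) (h : a ≤ E * a' + d) :
    max 0 (min 1 a) ≤ E * max 0 (min 1 a') + d := by
  rcases le_or_gt 1 a' with h1 | h1
  · rw [min_eq_left h1, max_eq_right zero_le_one]
    nlinarith [clip_le_one a]
  · have hc' : a' ≤ max 0 (min 1 a') := by
      rw [min_eq_right h1.le]; exact le_max_right _ _
    have h0 : (0:ℝ) ≤ max 0 (min 1 a') := le_max_left _ _
    apply max_le (by nlinarith)
    calc min 1 a ≤ a := min_le_right _ _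
      _ ≤ E * a' + d := h
      _ ≤ E * max 0 (min 1 a') + d := by nlinarith

private lemma clip_compl (a : ℝ) : 1 - max 0 (min 1 a) = max 0 (min 1 (1 - a)) := by
  rcases le_total a 0 with h | h
  · rw [min_eq_right (by linarith), max_eq_left h,
      min_eq_left (by linarith), max_eq_right (by linarith : (0:ℝ) ≤ 1)]
    norm_num
  · rcases le_total a 1 with h' | h'
    · rw [min_eq_right h', max_eq_right h, min_eq_right (by linarith),
        max_eq_right (by linarith)]
    · rw [min_eq_left h', max_eq_right zero_le_one, min_eq_right (by linarith),
        max_eq_left (by linarith), sub_self]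

private noncomputable def myF0 (b x : ℝ) : ℝ :=
  ∑' l : ℤ, (1 - b) / (1 + b) * b ^ l.natAbs * max 0 (min 1 (x - (l : ℝ) + 1 / 2))

private lemma natAbs_neg_succ (n : ℕ) : (-((n : ℤ) + 1)).natAbs = n + 1 := by
  rw [Int.natAbs_neg]
  exact_mod_cast Int.natAbs_natCast (n + 1)

private lemma summable_base {b : ℝ} (hb0 : 0 < b) (hb1 : b < 1) :
    Summable (fun l : ℤ => b ^ l.natAbs) := by
  apply Summable.of_nat_of_neg_add_one
  · simpa using summable_geometric_of_lt_one hb0.le hb1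
  · have he : (fun n : ℕ => b ^ (Int.natAbs (-((n : ℤ) + 1)))) = fun n : ℕ => b * b ^ n := by
      funext n; rw [natAbs_neg_succ, pow_succ, mul_comm]
    rw [he]
    exact (summable_geometric_of_lt_one hb0.le hb1).mul_left b

private lemma tsum_base {b : ℝ} (hb0 : 0 < b) (hb1 : b < 1) :
    ∑' l : ℤ, b ^ l.natAbs = (1 + b) / (1 - b) := by
  have h1 : Summable fun n : ℕ => b ^ (Int.natAbs (n : ℤ)) := by
    simpa using summable_geometric_of_lt_one hb0.le hb1
  have he : (fun n : ℕ => b ^ (Int.natAbs (-((n : ℤ) + 1)))) = fun n : ℕ => b * b ^ n := by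
    funext n; rw [natAbs_neg_succ, pow_succ, mul_comm]
  have h2 : Summable fun n : ℕ => b ^ (Int.natAbs (-((n : ℤ) + 1))) := by
    rw [he]; exact (summable_geometric_of_lt_one hb0.le hb1).mul_left b
  rw [tsum_of_nat_of_neg_add_one (f := fun l : ℤ => b ^ l.natAbs) h1 h2]
  have e1 : ∑' n : ℕ, b ^ (Int.natAbs (n : ℤ)) = (1 - b)⁻¹ := by
    simpa using tsum_geometric_of_lt_one hb0.le hb1
  have e2 : ∑' n : ℕ, b ^ (Int.natAbs (-((n : ℤ) + 1))) = b * (1 - b)⁻¹ := by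
    rw [he, tsum_mul_left, tsum_geometric_of_lt_one hb0.le hb1]
  rw [e1, e2]
  have hne : (1:ℝ) - b ≠ 0 := by linarith
  field_simp

private lemma hc_nonneg {b : ℝ} (hb0 : 0 < b) (hb1 : b < 1) : 0 ≤ (1 - b) / (1 + b) :=
  div_nonneg (by linarith) (by linarith)

private lemma summable_term {b : ℝ} (hb0 : 0 < b) (hb1 : b < 1) (g : ℤ → ℝ)
    (hg0 : ∀ l, 0 ≤ g l) (hg1 : ∀ l, g l ≤ 1) :
    Summable (fun l : ℤ => (1 - b) / (1 + b) * b ^ l.natAbs * g l) := by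
  apply Summable.of_nonneg_of_le
    (fun l => mul_nonneg (mul_nonneg (hc_nonneg hb0 hb1) (pow_nonneg hb0.le _)) (hg0 l))
    (fun l => ?_) ((summable_base hb0 hb1).mul_left ((1 - b) / (1 + b)))
  exact mul_le_of_le_one_right
    (mul_nonneg (hc_nonneg hb0 hb1) (pow_nonneg hb0.le _)) (hg1 l)

private lemma summable_F0 {b : ℝ} (hb0 : 0 < b) (hb1 : b < 1) (x : ℝ) :
    Summable (fun l : ℤ => (1 - b) / (1 + b) * b ^ l.natAbs *
      max 0 (min 1 (x - (l : ℝ) + 1 / 2))) :=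
  summable_term hb0 hb1 _ (fun l => le_max_left _ _) (fun l => clip_le_one _)

private lemma myF0_nonneg {b : ℝ} (hb0 : 0 < b) (hb1 : b < 1) (x : ℝ) : 0 ≤ myF0 b x :=
  tsum_nonneg fun l =>
    mul_nonneg (mul_nonneg (hc_nonneg hb0 hb1) (pow_nonneg hb0.le _)) (le_max_left _ _)

private lemma myF0_mono {b : ℝ} (hb0 : 0 < b) (hb1 : b < 1) {x y : ℝ} (hxy : x ≤ y) :
    myF0 b x ≤ myF0 b y := by
  apply Summable.tsum_le_tsum _ (summable_F0 hb0 hb1 x) (summable_F0 hb0 hb1 y)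
  intro l
  apply mul_le_mul_of_nonneg_left _ (mul_nonneg (hc_nonneg hb0 hb1) (pow_nonneg hb0.le _))
  exact max_le_max le_rfl (min_le_min le_rfl (by linarith))

private lemma myF0_add {b : ℝ} (hb0 : 0 < b) (hb1 : b < 1) (x : ℝ) :
    myF0 b x + myF0 b (-x) = 1 := by
  have hneg : myF0 b (-x) = ∑' l : ℤ, (1 - b) / (1 + b) * b ^ l.natAbs *
      max 0 (min 1 (1 - (x - (l : ℝ) + 1 / 2))) := by
    rw [myF0]
    rw [← Equiv.tsum_eq (Equiv.neg ℤ) (fun l : ℤ => (1 - b) / (1 + b) * b ^ l.natAbs *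
      max 0 (min 1 (-x - (l : ℝ) + 1 / 2)))]
    apply tsum_congr
    intro l
    simp only [Equiv.neg_apply, Int.natAbs_neg, Int.cast_neg]
    congr 2
    ring
  rw [myF0, hneg, ← Summable.tsum_add (summable_F0 hb0 hb1 x)
    (summable_term hb0 hb1 _ (fun l => le_max_left _ _) (fun l => clip_le_one _))]
  have hpt : ∀ l : ℤ, (1 - b) / (1 + b) * b ^ l.natAbs * max 0 (min 1 (x - (l : ℝ) + 1 / 2)) +
      (1 - b) / (1 + b) * b ^ l.natAbs * max 0 (min 1 (1 - (x - (l : ℝ) + 1 / 2))) =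
      (1 - b) / (1 + b) * b ^ l.natAbs := by
    intro l
    rw [← mul_add, ← clip_compl]
    ring
  rw [tsum_congr hpt, tsum_mul_left, tsum_base hb0 hb1]
  have h1 : (1:ℝ) - b ≠ 0 := by linarith
  have h2 : (1:ℝ) + b ≠ 0 := by linarith
  field_simp

private lemma myF0_le_one {b : ℝ} (hb0 : 0 < b) (hb1 : b < 1) (x : ℝ) : myF0 b x ≤ 1 := by
  have h1 := myF0_add hb0 hb1 x
  have h2 := myF0_nonneg hb0 hb1 (-x)
  linarith

private lemma myF0_key {b : ℝ} (hb0 : 0 < b) (hb1 : b < 1) (x : ℝ) :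
    b * myF0 b x ≤ myF0 b (x - 1) := by
  set f : ℤ → ℝ := fun l => (1 - b) / (1 + b) * b ^ l.natAbs *
    max 0 (min 1 (x - 1 - (l : ℝ) + 1 / 2)) with hf
  have hfsum : Summable f := summable_F0 hb0 hb1 (x - 1)
  have hsum2 : Summable (fun l : ℤ => f (l - 1)) := by
    have := (Equiv.subRight (1 : ℤ)).summable_iff.mpr hfsum
    exact this
  have hterm : ∀ l : ℤ, b * ((1 - b) / (1 + b) * b ^ l.natAbs *
      max 0 (min 1 (x - (l : ℝ) + 1 / 2))) ≤ f (l - 1) := by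
    intro l
    have harg : x - 1 - ((l - 1 : ℤ) : ℝ) + 1 / 2 = x - (l : ℝ) + 1 / 2 := by
      push_cast; ring
    rw [hf]
    simp only [harg]
    have hpow : b ^ (l.natAbs + 1) ≤ b ^ (l - 1).natAbs := by
      apply pow_le_pow_of_le_one hb0.le hb1.le
      calc (l - 1).natAbs ≤ l.natAbs + (1 : ℤ).natAbs := Int.natAbs_sub_le l 1
        _ = l.natAbs + 1 := rfl
    have hclip0 : (0:ℝ) ≤ max 0 (min 1 (x - (l : ℝ) + 1 / 2)) := le_max_left _ _
    calc b * ((1 - b) / (1 + b) * b ^ l.natAbs * max 0 (min 1 (x - (l : ℝ) + 1 / 2)))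
        = (1 - b) / (1 + b) * b ^ (l.natAbs + 1) * max 0 (min 1 (x - (l : ℝ) + 1 / 2)) := by
          rw [pow_succ]; ring
      _ ≤ (1 - b) / (1 + b) * b ^ (l - 1).natAbs * max 0 (min 1 (x - (l : ℝ) + 1 / 2)) := by
          apply mul_le_mul_of_nonneg_right _ hclip0
          exact mul_le_mul_of_nonneg_left hpow (hc_nonneg hb0 hb1)
  calc b * myF0 b x = ∑' l : ℤ, b * ((1 - b) / (1 + b) * b ^ l.natAbs *
        max 0 (min 1 (x - (l : ℝ) + 1 / 2))) := by rw [myF0, tsum_mul_left]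
    _ ≤ ∑' l : ℤ, f (l - 1) := Summable.tsum_le_tsum hterm
        ((summable_F0 hb0 hb1 x).mul_left b) hsum2
    _ = ∑' l : ℤ, f ((Equiv.subRight (1 : ℤ)) l) := tsum_congr fun l => by
          simp [Equiv.subRight_apply]
    _ = ∑' l : ℤ, f l := Equiv.tsum_eq _ f
    _ = myF0 b (x - 1) := rfl

theorem stmt_10 (n : ℕ) (hn : 1 ≤ n) (ε δ : ℝ) (hε : 0 < ε) (hδ : 0 ≤ δ)
    (m b q : ℝ) (hb : b = Real.exp (-ε)) (hq : q = 2 * δ * b / (1 - b + 2 * δ * b))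
    (F₀ FN : ℝ → ℝ)
    (hF₀ : ∀ x : ℝ, F₀ x = ∑' l : ℤ,
      ((1 - b) / (1 + b)) * b ^ l.natAbs * max 0 (min 1 (x - l + 1 / 2)))
    (hFN : ∀ x : ℝ, FN x = max 0 (min 1 ((F₀ x - q / 2) / (1 - q))))
    (φ : ℕ → ℝ) (hφ : ∀ x : ℕ, φ x = FN ((x : ℝ) - m)) :
    ∀ x : ℕ, 1 ≤ x → x ≤ n →
      φ x ≤ Real.exp ε * φ (x - 1) + δ ∧
      φ (x - 1) ≤ Real.exp ε * φ x + δ ∧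
      1 - φ x ≤ Real.exp ε * (1 - φ (x - 1)) + δ ∧
      1 - φ (x - 1) ≤ Real.exp ε * (1 - φ x) + δ := by
  have hb0 : 0 < b := hb ▸ Real.exp_pos _
  have hb1 : b < 1 := by rw [hb, Real.exp_lt_one_iff]; linarith
  set E := Real.exp ε with hE
  have hE1 : 1 ≤ E := Real.one_le_exp hε.le
  have hEb : E * b = 1 := by
    rw [hb, hE, ← Real.exp_add]
    simp
  have hF0 : F₀ = myF0 b := by
    funext x; rw [hF₀ x, myF0]
  have hD : 0 < 1 - b + 2 * δ * b := by nlinarith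
  have hq2 : q * (1 - b + 2 * δ * b) = 2 * δ * b := by
    rw [hq]; field_simp
  have hq0 : 0 ≤ q := by
    rw [hq]; exact div_nonneg (by nlinarith) hD.le
  have h1q : 0 < 1 - q := by
    rw [hq]
    have heq : 1 - 2 * δ * b / (1 - b + 2 * δ * b) = (1 - b) / (1 - b + 2 * δ * b) := by
      field_simp
      ring
    rw [heq]
    exact div_pos (by linarith) hD
  have hid : E * (q / 2) - q / 2 = δ * (1 - q) := by
    have hidD : (E * (q / 2) - q / 2) * (1 - b + 2 * δ * b) =
        δ * (1 - q) * (1 - b + 2 * δ * b) := by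
      linear_combination ((E - 1) / 2 + δ) * hq2 + δ * hEb
    exact mul_right_cancel₀ hD.ne' hidD
  intro x hx1 hxn
  set y : ℝ := (x : ℝ) - m with hy
  have hcast : ((x - 1 : ℕ) : ℝ) = (x : ℝ) - 1 := by
    have h1 : (1:ℕ) ≤ x := hx1
    push_cast [Nat.cast_sub h1]
    ring
  have hφx : φ x = max 0 (min 1 ((F₀ y - q / 2) / (1 - q))) := by
    rw [hφ, hFN]
  have hφx' : φ (x - 1) = max 0 (min 1 ((F₀ (y - 1) - q / 2) / (1 - q))) := by
    rw [hφ, hFN, hcast]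
    have e : (x:ℝ) - 1 - m = y - 1 := by rw [hy]; ring
    rw [e]
  have hmono : F₀ (y - 1) ≤ F₀ y := by
    rw [hF0]; exact myF0_mono hb0 hb1 (by linarith)
  have h0le : 0 ≤ F₀ (y - 1) := by rw [hF0]; exact myF0_nonneg hb0 hb1 _
  have h0le' : 0 ≤ F₀ y := by rw [hF0]; exact myF0_nonneg hb0 hb1 _
  have hle1 : F₀ y ≤ 1 := by rw [hF0]; exact myF0_le_one hb0 hb1 _
  have hle1' : F₀ (y - 1) ≤ 1 := by rw [hF0]; exact myF0_le_one hb0 hb1 _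
  have hkey1 : F₀ y ≤ E * F₀ (y - 1) := by
    have hk := myF0_key hb0 hb1 y
    rw [← hF0] at hk
    nlinarith [hEb, hk, h0le']
  have hkey2 : 1 - F₀ (y - 1) ≤ E * (1 - F₀ y) := by
    have h1 := myF0_key hb0 hb1 (1 - y)
    rw [← hF0] at h1
    have e1 : (1 : ℝ) - y - 1 = -y := by ring
    rw [e1] at h1
    have e2 := myF0_add hb0 hb1 (y - 1)
    have e3 := myF0_add hb0 hb1 y
    rw [← hF0] at e2 e3
    have e4 : -(y - 1) = 1 - y := by ring
    rw [e4] at e2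
    nlinarith [hEb, h1]
  have hrw : ∀ u v : ℝ, (u ≤ E * v + δ * (1 - q)) →
      u / (1 - q) ≤ E * (v / (1 - q)) + δ := by
    intro u v h
    have heq : E * (v / (1 - q)) + δ = (E * v + δ * (1 - q)) / (1 - q) := by
      field_simp
    rw [heq]
    exact div_le_div_of_nonneg_right h h1q.le
  have hcompl : ∀ t : ℝ, 1 - (F₀ t - q / 2) / (1 - q) = (1 - q / 2 - F₀ t) / (1 - q) := by
    intro t; field_simp; ring
  refine ⟨?_, ?_, ?_, ?_⟩
  · rw [hφx, hφx']
    apply clip_ineq hE1 hδ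
    apply hrw
    nlinarith [hkey1, hid]
  · rw [hφx, hφx']
    apply clip_ineq hE1 hδ
    apply hrw
    nlinarith [hmono, h0le', hE1, hid]
  · rw [hφx, hφx', clip_compl, clip_compl, hcompl, hcompl]
    apply clip_ineq hE1 hδ
    apply hrw
    nlinarith [hmono, hle1', hE1, hid]
  · rw [hφx, hφx', clip_compl, clip_compl, hcompl, hcompl]
    apply clip_ineq hE1 hδ
    apply hrw
    nlinarith [hkey2, hid]
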